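/- For τ ≥ 0 and integer n ≥ 0, the function Q_n(τ) = ∫_0^1 (1−z)ⁿ J₀(2√τ √(−z − log(1−z))) dz, expanded via the Bessel series, at τ = 0 equals 1/(n+1), and satisfies the ODE system Q_n′(τ) = (1/(n+1))(Q_{n+1}(τ) − Q_n(τ)). -/

import Mathlib

open MeasureTheory Real Set intervalIntegral

/-- The Bessel function of the first kind of order 0. -/
noncomputable def besselJ0 (x : ℝ) : ℝ :=
  ∑' k : ℕ, (-1 : ℝ) ^ k * (x / 2) ^ (2 * k) / ((Nat.factorial k : ℝ)) ^ 2

/-- `Q_n(τ)` from the short-time heavy-traffic analysis. -/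
noncomputable def Qfun (n : ℕ) (τ : ℝ) : ℝ :=
  ∫ z in (0 : ℝ)..1,
    (1 - z) ^ n * besselJ0 (2 * Real.sqrt τ * Real.sqrt (-z - Real.log (1 - z)))

noncomputable def sfun (z : ℝ) : ℝ := -z - Real.log (1 - z)

lemma sfun_nonneg {z : ℝ} (h0 : 0 ≤ z) (h1 : z < 1) : 0 ≤ sfun z := by
  have := Real.log_le_sub_one_of_pos (x := 1 - z) (by linarith)
  simp only [sfun]; linarith

lemma sfun_le {z : ℝ} (h0 : 0 ≤ z) : sfun z ≤ -Real.log (1 - z) := by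
  simp only [sfun]; linarith

lemma sfun_continuousOn : ContinuousOn sfun (Set.Ioo (0:ℝ) 1) := by
  intro z hz
  have h1 : (1:ℝ) - z ≠ 0 := by simp only [Set.mem_Ioo] at hz; intro h; nlinarith [hz.2]
  exact ((continuousAt_id.neg.sub ((Real.continuousAt_log h1).comp
    (continuousAt_const.sub continuousAt_id))).continuousWithinAt)

lemma sfun_hasDerivAt {z : ℝ} (h1 : z < 1) :
    HasDerivAt sfun (z / (1 - z)) z := by
  have hne : (1:ℝ) - z ≠ 0 := by intro h; linarith
  have h : HasDerivAt (fun z : ℝ => Real.log (1 - z)) ((-1) / (1 - z)) z := by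
    have := (Real.hasDerivAt_log hne).comp z ((hasDerivAt_id z).const_sub 1)
    exact this.congr_deriv (by ring)
  have := ((hasDerivAt_id z).neg).sub h
  exact this.congr_deriv (by field_simp; ring)

lemma exp_pow_integrable (k : ℕ) :
    IntegrableOn (fun x : ℝ => Real.exp (-x) * x ^ k) (Set.Ioi 0) := by
  have h := Real.GammaIntegral_convergent (s := (k:ℝ) + 1) (by positivity)
  refine h.congr_fun ?_ measurableSet_Ioi
  intro x hx
  simp only [add_sub_cancel_right]
  rw [Real.rpow_natCast]

lemma exp_pow_integral (k : ℕ) :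
    ∫ x in Set.Ioi (0:ℝ), Real.exp (-x) * x ^ k = k.factorial := by
  have h := Real.Gamma_eq_integral (s := (k:ℝ) + 1) (by positivity)
  rw [Real.Gamma_nat_eq_factorial k] at h
  simp only [add_sub_cancel_right] at h
  rw [h]
  refine setIntegral_congr_fun measurableSet_Ioi ?_
  intro x hx
  simp [Real.rpow_natCast]

lemma image_Ioi : (fun x : ℝ => 1 - Real.exp (-x)) '' Set.Ioi 0 = Set.Ioo 0 1 := by
  ext y
  constructor
  · rintro ⟨x, hx, rfl⟩
    simp only [Set.mem_Ioi] at hx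
    have h1 : Real.exp (-x) < 1 := by
      rw [Real.exp_lt_one_iff]; linarith
    have h2 : 0 < Real.exp (-x) := Real.exp_pos _
    constructor <;> simp <;> linarith
  · rintro ⟨h0, h1⟩
    refine ⟨-Real.log (1 - y), ?_, ?_⟩
    · simp only [Set.mem_Ioi]
      have := Real.log_neg (x := 1 - y) (by linarith) (by linarith)
      linarith
    · show 1 - Real.exp (- -Real.log (1 - y)) = y
      rw [neg_neg, Real.exp_log (by linarith)]; ring

lemma deriv_map (x : ℝ) : HasDerivWithinAt (fun x : ℝ => 1 - Real.exp (-x))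
    (Real.exp (-x)) (Set.Ioi 0) x := by
  have : HasDerivAt (fun x : ℝ => 1 - Real.exp (-x)) (Real.exp (-x)) x := by
    have := ((Real.hasDerivAt_exp (-x)).comp x ((hasDerivAt_id x).neg)).const_sub 1
    simpa using this
  exact this.hasDerivWithinAt

lemma map_injOn : Set.InjOn (fun x : ℝ => 1 - Real.exp (-x)) (Set.Ioi 0) := by
  intro a _ b _ h
  simp only [sub_right_inj, Real.exp_eq_exp, neg_inj] at h
  exact h

lemma neglog_integral (k : ℕ) :
    ∫ z in Set.Ioo (0:ℝ) 1, (-Real.log (1 - z)) ^ k = k.factorial := by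
  have h := MeasureTheory.integral_image_eq_integral_abs_deriv_smul measurableSet_Ioi
    (fun x _ => deriv_map x) map_injOn (fun z => (-Real.log (1 - z)) ^ k)
  rw [image_Ioi] at h
  rw [h, ← exp_pow_integral k]
  refine setIntegral_congr_fun measurableSet_Ioi ?_
  intro x hx
  have : (1:ℝ) - (1 - Real.exp (-x)) = Real.exp (-x) := by ring
  simp only [smul_eq_mul, this, Real.log_exp, neg_neg,
    abs_of_pos (Real.exp_pos (-x))]

lemma neglog_integrable (k : ℕ) :
    IntegrableOn (fun z : ℝ => (-Real.log (1 - z)) ^ k) (Set.Ioo (0:ℝ) 1) := by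
  have h := (MeasureTheory.integrableOn_image_iff_integrableOn_abs_deriv_smul measurableSet_Ioi
    (fun x _ => deriv_map x) map_injOn (fun z => (-Real.log (1 - z)) ^ k))
  rw [image_Ioi] at h
  rw [h]
  refine (exp_pow_integrable k).congr_fun ?_ measurableSet_Ioi
  intro x hx
  have : (1:ℝ) - (1 - Real.exp (-x)) = Real.exp (-x) := by ring
  simp only [smul_eq_mul, this, Real.log_exp, neg_neg,
    abs_of_pos (Real.exp_pos (-x))]

noncomputable def Amom (n k : ℕ) : ℝ := ∫ z in Set.Ioo (0:ℝ) 1, (1 - z) ^ n * sfun z ^ k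

lemma integrand_bound {n k : ℕ} {z : ℝ} (hz : z ∈ Set.Ioo (0:ℝ) 1) :
    0 ≤ (1 - z) ^ n * sfun z ^ k ∧ (1 - z) ^ n * sfun z ^ k ≤ (-Real.log (1 - z)) ^ k := by
  obtain ⟨h0, h1⟩ := hz
  have hs0 : 0 ≤ sfun z := sfun_nonneg h0.le h1
  have hz1 : (0:ℝ) ≤ 1 - z := by linarith
  constructor
  · positivity
  · have hp : (1 - z) ^ n ≤ 1 := pow_le_one₀ hz1 (by linarith)
    calc (1 - z) ^ n * sfun z ^ k ≤ 1 * sfun z ^ k :=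
          mul_le_mul_of_nonneg_right hp (by positivity)
      _ = sfun z ^ k := one_mul _
      _ ≤ (-Real.log (1 - z)) ^ k := by
          gcongr
          exact sfun_le h0.le

lemma Amom_integrable (n k : ℕ) :
    IntegrableOn (fun z => (1 - z) ^ n * sfun z ^ k) (Set.Ioo (0:ℝ) 1) := by
  refine Integrable.mono' (neglog_integrable k) ?_ ?_
  · refine ContinuousOn.aestronglyMeasurable ?_ measurableSet_Ioo
    exact (continuousOn_const.sub continuousOn_id).pow n |>.mul (sfun_continuousOn.pow k)
  · filter_upwards [ae_restrict_mem measurableSet_Ioo] with z hz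
    have := integrand_bound (n := n) (k := k) hz
    rw [Real.norm_of_nonneg this.1]
    exact this.2

lemma Amom_nonneg (n k : ℕ) : 0 ≤ Amom n k := by
  refine setIntegral_nonneg measurableSet_Ioo ?_
  intro z hz
  exact (integrand_bound hz).1

lemma Amom_le (n k : ℕ) : Amom n k ≤ k.factorial := by
  rw [← neglog_integral k]
  refine setIntegral_mono_on (Amom_integrable n k) (neglog_integrable k) measurableSet_Ioo ?_
  intro z hz
  exact (integrand_bound hz).2


lemma besselJ0_eq {a b : ℝ} (ha : 0 ≤ a) (hb : 0 ≤ b) :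
    besselJ0 (2 * Real.sqrt a * Real.sqrt b)
      = ∑' k : ℕ, (-1 : ℝ) ^ k * (a * b) ^ k / ((Nat.factorial k : ℝ)) ^ 2 := by
  refine tsum_congr fun k => ?_
  congr 1
  congr 1
  have h2 : 2 * Real.sqrt a * Real.sqrt b / 2 = Real.sqrt a * Real.sqrt b := by ring
  rw [h2, pow_mul]
  congr 1
  rw [mul_pow, sq_sqrt ha, sq_sqrt hb]

lemma summable_coef (x : ℝ) (c : ℕ → ℝ) (hc : ∀ k, |c k| ≤ k.factorial) :
    Summable (fun k : ℕ => c k * x ^ k / ((Nat.factorial k : ℝ)) ^ 2) := by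
  refine Summable.of_norm ?_
  refine Summable.of_nonneg_of_le (fun k => norm_nonneg _) (fun k => ?_)
    (Real.summable_pow_div_factorial |x|)
  have hk : (0:ℝ) < (Nat.factorial k : ℝ) := by positivity
  rw [norm_div, norm_mul, norm_pow]
  rw [show ‖((Nat.factorial k : ℝ)) ^ 2‖ = ((Nat.factorial k : ℝ)) ^ 2 by
    rw [Real.norm_of_nonneg (by positivity)]]
  rw [div_le_div_iff₀ (by positivity) (by positivity)]
  calc ‖c k‖ * ‖x‖ ^ k * (Nat.factorial k : ℝ)
      ≤ (Nat.factorial k : ℝ) * ‖x‖ ^ k * (Nat.factorial k : ℝ) := by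
        have := hc k
        rw [Real.norm_eq_abs]
        gcongr
    _ = |x| ^ k * (Nat.factorial k : ℝ) ^ 2 := by rw [Real.norm_eq_abs]; ring

lemma Q_eq {n : ℕ} {τ : ℝ} (hτ : 0 ≤ τ) :
    Qfun n τ = ∑' k : ℕ, (-1 : ℝ) ^ k * τ ^ k * Amom n k / ((Nat.factorial k : ℝ)) ^ 2 := by
  have key : ∑' k : ℕ, (∫ z in Set.Ioo (0:ℝ) 1,
        ((-1 : ℝ) ^ k * τ ^ k / ((Nat.factorial k : ℝ)) ^ 2) * ((1 - z) ^ n * sfun z ^ k))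
      = ∫ z in Set.Ioo (0:ℝ) 1, ∑' k : ℕ,
        ((-1 : ℝ) ^ k * τ ^ k / ((Nat.factorial k : ℝ)) ^ 2) * ((1 - z) ^ n * sfun z ^ k) := by
    refine integral_tsum_of_summable_integral_norm (fun k => (Amom_integrable n k).const_mul _) ?_
    refine Summable.of_nonneg_of_le
      (fun k => integral_nonneg fun z => norm_nonneg _) (fun k => ?_)
      (Real.summable_pow_div_factorial τ)
    have heq : ∫ z in Set.Ioo (0:ℝ) 1,
        ‖((-1 : ℝ) ^ k * τ ^ k / ((Nat.factorial k : ℝ)) ^ 2) * ((1 - z) ^ n * sfun z ^ k)‖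
        = (τ ^ k / ((Nat.factorial k : ℝ)) ^ 2) * Amom n k := by
      rw [show (τ ^ k / ((Nat.factorial k : ℝ)) ^ 2) * Amom n k
          = ∫ z in Set.Ioo (0:ℝ) 1,
            (τ ^ k / ((Nat.factorial k : ℝ)) ^ 2) * ((1 - z) ^ n * sfun z ^ k) from
        (MeasureTheory.integral_const_mul _ _).symm]
      refine setIntegral_congr_fun measurableSet_Ioo (fun z hz => ?_)
      rw [norm_mul, Real.norm_of_nonneg (integrand_bound hz).1]
      congr 1
      rw [norm_div, norm_mul, norm_pow, norm_pow]
      simp [abs_of_nonneg hτ, abs_of_nonneg (Nat.cast_nonneg (α := ℝ) k.factorial)]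
    rw [heq]
    calc (τ ^ k / ((Nat.factorial k : ℝ)) ^ 2) * Amom n k
        ≤ (τ ^ k / ((Nat.factorial k : ℝ)) ^ 2) * (Nat.factorial k : ℝ) :=
          mul_le_mul_of_nonneg_left (Amom_le n k) (by positivity)
      _ = τ ^ k / (Nat.factorial k : ℝ) := by
          field_simp
  have lhs_eq : Qfun n τ = ∫ z in Set.Ioo (0:ℝ) 1,
      (1 - z) ^ n * besselJ0 (2 * Real.sqrt τ * Real.sqrt (sfun z)) := by
    rw [Qfun, intervalIntegral.integral_of_le zero_le_one,
      MeasureTheory.integral_Ioc_eq_integral_Ioo]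
    rfl
  have rhs_int : ∫ z in Set.Ioo (0:ℝ) 1,
      (1 - z) ^ n * besselJ0 (2 * Real.sqrt τ * Real.sqrt (sfun z))
      = ∫ z in Set.Ioo (0:ℝ) 1, ∑' k : ℕ,
        ((-1 : ℝ) ^ k * τ ^ k / ((Nat.factorial k : ℝ)) ^ 2) * ((1 - z) ^ n * sfun z ^ k) := by
    refine setIntegral_congr_fun measurableSet_Ioo (fun z hz => ?_)
    rw [besselJ0_eq hτ (sfun_nonneg hz.1.le hz.2), ← tsum_mul_left]
    refine tsum_congr fun k => ?_
    rw [mul_pow]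
    ring
  rw [lhs_eq, rhs_int, ← key]
  refine tsum_congr fun k => ?_
  rw [MeasureTheory.integral_const_mul]
  rw [Amom]
  ring

noncomputable def hfun (n k : ℕ) (z : ℝ) : ℝ :=
  ((k:ℝ) + 1) * (1 - z) ^ n * z * sfun z ^ k - ((n:ℝ) + 1) * (1 - z) ^ n * sfun z ^ (k + 1)

lemma hfun_eq (n k : ℕ) (z : ℝ) :
    hfun n k z = ((k:ℝ) + 1) * ((1 - z) ^ n * sfun z ^ k)
      - ((k:ℝ) + 1) * ((1 - z) ^ (n + 1) * sfun z ^ k)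
      - ((n:ℝ) + 1) * ((1 - z) ^ n * sfun z ^ (k + 1)) := by
  simp only [hfun, pow_succ]
  ring

lemma hfun_integrable (n k : ℕ) : IntegrableOn (hfun n k) (Set.Ioo (0:ℝ) 1) := by
  have h := (((Amom_integrable n k).const_mul ((k:ℝ)+1)).sub
    ((Amom_integrable (n+1) k).const_mul ((k:ℝ)+1))).sub
    ((Amom_integrable n (k+1)).const_mul ((n:ℝ)+1))
  exact MeasureTheory.IntegrableOn.congr_fun h (fun z _ => by simp [hfun_eq n k z]) measurableSet_Ioo

lemma hfun_integral (n k : ℕ) :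
    ∫ z in Set.Ioo (0:ℝ) 1, hfun n k z
      = ((k:ℝ) + 1) * (Amom n k - Amom (n+1) k) - ((n:ℝ) + 1) * Amom n (k+1) := by
  rw [setIntegral_congr_fun measurableSet_Ioo (fun z (_ : z ∈ Set.Ioo (0:ℝ) 1) => hfun_eq n k z)]
  have i1 : Integrable (fun x => ((k:ℝ)+1) * ((1 - x) ^ n * sfun x ^ k))
      (volume.restrict (Set.Ioo (0:ℝ) 1)) := (Amom_integrable n k).const_mul _
  have i2 : Integrable (fun x => ((k:ℝ)+1) * ((1 - x) ^ (n+1) * sfun x ^ k))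
      (volume.restrict (Set.Ioo (0:ℝ) 1)) := (Amom_integrable (n+1) k).const_mul _
  have i3 : Integrable (fun x => ((n:ℝ)+1) * ((1 - x) ^ n * sfun x ^ (k+1)))
      (volume.restrict (Set.Ioo (0:ℝ) 1)) := (Amom_integrable n (k+1)).const_mul _
  have i12 : Integrable (fun x => ((k:ℝ)+1) * ((1 - x) ^ n * sfun x ^ k)
      - ((k:ℝ)+1) * ((1 - x) ^ (n+1) * sfun x ^ k))
      (volume.restrict (Set.Ioo (0:ℝ) 1)) := i1.sub i2
  rw [MeasureTheory.integral_sub i12 i3, MeasureTheory.integral_sub i1 i2,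
    MeasureTheory.integral_const_mul, MeasureTheory.integral_const_mul,
    MeasureTheory.integral_const_mul]
  simp only [Amom]
  ring

lemma Ffun_deriv {n k : ℕ} {z : ℝ} (hz : z < 1) :
    HasDerivAt (fun z => (1 - z) ^ (n + 1) * sfun z ^ (k + 1)) (hfun n k z) z := by
  have hne : (1:ℝ) - z ≠ 0 := by intro h; linarith
  have h1 : HasDerivAt (fun z : ℝ => (1 - z) ^ (n + 1))
      (((n:ℝ) + 1) * (1 - z) ^ n * (-1)) z := by
    have := (((hasDerivAt_id z).const_sub 1).pow (n + 1))
    exact this.congr_deriv (by simp)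
  have h2 : HasDerivAt (fun z => sfun z ^ (k + 1))
      (((k:ℝ) + 1) * sfun z ^ k * (z / (1 - z))) z := by
    have := (sfun_hasDerivAt hz).pow (k + 1)
    exact this.congr_deriv (by simp)
  have := h1.mul h2
  refine this.congr_deriv ?_
  simp only [hfun, pow_succ]
  field_simp
  ring

lemma ibp_partial (n k : ℕ) {b : ℝ} (hb0 : 0 ≤ b) (hb1 : b < 1) :
    ∫ z in (0:ℝ)..b, hfun n k z = (1 - b) ^ (n + 1) * sfun b ^ (k + 1) := by
  have hcont : ContinuousOn (hfun n k) (Set.uIcc 0 b) := by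
    intro z hz
    have hz1 : z < 1 := by
      rcases Set.mem_uIcc.mp hz with h | h
      · exact lt_of_le_of_lt h.2 hb1
      · exact lt_of_le_of_lt h.2 (lt_of_le_of_lt hb0 hb1)
    have hs : ContinuousAt sfun z := (sfun_hasDerivAt hz1).continuousAt
    have : ContinuousAt (hfun n k) z := by
      unfold hfun
      exact ContinuousAt.sub
        (ContinuousAt.mul (ContinuousAt.mul (ContinuousAt.mul continuousAt_const
          ((continuousAt_const.sub continuousAt_id).pow n)) continuousAt_id) (hs.pow k))
        (ContinuousAt.mul (ContinuousAt.mul continuousAt_const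
          ((continuousAt_const.sub continuousAt_id).pow n)) (hs.pow (k+1)))
    exact this.continuousWithinAt
  have hF0 : (fun z => (1 - z) ^ (n + 1) * sfun z ^ (k + 1)) 0 = 0 := by
    simp [sfun]
  have h := intervalIntegral.integral_eq_sub_of_hasDerivAt
    (f := fun z => (1 - z) ^ (n + 1) * sfun z ^ (k + 1)) (f' := hfun n k)
    (a := (0:ℝ)) (b := b) ?_ (hcont.intervalIntegrable)
  · rw [h, show (1 - (0:ℝ)) ^ (n + 1) * sfun 0 ^ (k + 1) = 0 from hF0, sub_zero]
  · intro z hz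
    have hz1 : z < 1 := by
      rw [Set.uIcc_of_le hb0] at hz
      exact lt_of_le_of_lt hz.2 hb1
    exact Ffun_deriv hz1

open Filter Topology in
lemma tendsto_aux (n k : ℕ) :
    Tendsto (fun u : ℝ => u ^ (n+1) * (-Real.log u) ^ (k+1)) (𝓝[>] (0:ℝ)) (𝓝 0) := by
  set r : ℝ := ((n:ℝ) + 1) / ((k:ℝ) + 1) with hr_def
  have hr : 0 < r := by positivity
  have h := tendsto_log_mul_rpow_nhdsGT_zero hr
  have h2 : Tendsto (fun x : ℝ => (-(Real.log x * x ^ r)) ^ (k+1)) (𝓝[>] (0:ℝ)) (𝓝 0) := by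
    have := (h.neg).pow (k+1)
    simpa using this
  refine h2.congr' ?_
  filter_upwards [self_mem_nhdsWithin] with x (hx : 0 < x)
  have hxr : (x ^ r) ^ (k+1) = x ^ (n+1) := by
    rw [← Real.rpow_natCast (x ^ r) (k+1), ← Real.rpow_natCast x (n+1),
      ← Real.rpow_mul hx.le]
    congr 1
    rw [hr_def]
    field_simp
    push_cast
    ring
  calc (-(Real.log x * x ^ r)) ^ (k+1)
      = (-Real.log x) ^ (k+1) * (x ^ r) ^ (k+1) := by rw [← mul_pow]; ring_nf
    _ = x ^ (n+1) * (-Real.log x) ^ (k+1) := by rw [hxr]; ring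

open Filter Topology in
lemma F_tendsto (n k : ℕ) :
    Tendsto (fun b : ℝ => (1 - b) ^ (n+1) * sfun b ^ (k+1))
      (𝓝[Set.Ico (0:ℝ) 1] 1) (𝓝 0) := by
  have htend : Tendsto (fun b : ℝ => 1 - b) (𝓝[Set.Ico (0:ℝ) 1] 1) (𝓝[>] (0:ℝ)) := by
    refine tendsto_nhdsWithin_of_tendsto_nhds_of_eventually_within _ ?_ ?_
    · have hc : Continuous (fun b : ℝ => 1 - b) := by fun_prop
      have : Tendsto (fun b : ℝ => 1 - b) (𝓝 (1:ℝ)) (𝓝 (0:ℝ)) := by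
        simpa using hc.tendsto (1:ℝ)
      exact this.mono_left nhdsWithin_le_nhds
    · filter_upwards [self_mem_nhdsWithin] with b hb
      exact Set.mem_Ioi.mpr (by linarith [hb.2])
  have hG := (tendsto_aux n k).comp htend
  refine squeeze_zero' ?_ ?_ hG
  · filter_upwards [self_mem_nhdsWithin] with b hb
    have := sfun_nonneg hb.1 hb.2
    have : (0:ℝ) ≤ 1 - b := by linarith [hb.2]
    positivity
  · filter_upwards [self_mem_nhdsWithin] with b hb
    have hs0 := sfun_nonneg hb.1 hb.2
    have hsle := sfun_le (z := b) hb.1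
    have h1b : (0:ℝ) ≤ 1 - b := by linarith [hb.2]
    show (1 - b) ^ (n+1) * sfun b ^ (k+1) ≤ (1-b) ^ (n+1) * (-Real.log (1-b)) ^ (k+1)
    gcongr
  
open Filter Topology in
lemma int_hfun_zero (n k : ℕ) : ∫ z in Set.Ioo (0:ℝ) 1, hfun n k z = 0 := by
  have hclos : (1:ℝ) ∈ closure (Set.Ico (0:ℝ) 1) := by
    rw [closure_Ico (by norm_num : (0:ℝ) ≠ 1)]
    exact Set.right_mem_Icc.mpr zero_le_one
  haveI hne : (𝓝[Set.Ico (0:ℝ) 1] (1:ℝ)).NeBot := mem_closure_iff_nhdsWithin_neBot.mp hclos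
  set φ : ℝ → ℝ := fun b => ∫ z in (0:ℝ)..b, hfun n k z with hφ
  have hint : IntegrableOn (hfun n k) (Set.uIcc (0:ℝ) 1) := by
    rw [Set.uIcc_of_le zero_le_one]
    exact (integrableOn_Icc_iff_integrableOn_Ioo).mpr (hfun_integrable n k)
  have hφcont : ContinuousOn φ (Set.uIcc (0:ℝ) 1) :=
    intervalIntegral.continuousOn_primitive_interval hint
  have h1mem : (1:ℝ) ∈ Set.uIcc (0:ℝ) 1 := Set.right_mem_uIcc
  have htend1 : Tendsto φ (𝓝[Set.Ico (0:ℝ) 1] 1) (𝓝 (φ 1)) := by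
    have := (hφcont 1 h1mem).tendsto
    refine this.mono_left (nhdsWithin_mono _ ?_)
    rw [Set.uIcc_of_le zero_le_one]
    exact Set.Ico_subset_Icc_self
  have htend0 : Tendsto φ (𝓝[Set.Ico (0:ℝ) 1] 1) (𝓝 0) := by
    refine (F_tendsto n k).congr' ?_
    filter_upwards [self_mem_nhdsWithin] with b hb
    exact (ibp_partial n k hb.1 hb.2).symm
  have hφ1 : φ 1 = 0 := tendsto_nhds_unique htend1 htend0
  rw [hφ] at hφ1
  simp only [intervalIntegral.integral_of_le zero_le_one,
    MeasureTheory.integral_Ioc_eq_integral_Ioo] at hφ1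
  exact hφ1

lemma Amom_rec (n k : ℕ) :
    ((n:ℝ) + 1) * Amom n (k+1) = ((k:ℝ) + 1) * (Amom n k - Amom (n+1) k) := by
  have h := hfun_integral n k
  rw [int_hfun_zero n k] at h
  linarith

noncomputable def coefA (n k : ℕ) : ℝ := (-1 : ℝ) ^ k * Amom n k / ((Nat.factorial k : ℝ)) ^ 2

lemma summable_coefA (n : ℕ) (x : ℝ) : Summable (fun k => coefA n k * x ^ k) := by
  have h := summable_coef x (fun k => (-1 : ℝ) ^ k * Amom n k) (fun k => by
    rw [abs_mul, abs_pow, abs_neg, abs_one, one_pow, one_mul,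
      abs_of_nonneg (Amom_nonneg n k)]
    exact Amom_le n k)
  refine h.congr fun k => ?_
  rw [coefA]
  ring

lemma Q_eq' {n : ℕ} {τ : ℝ} (hτ : 0 ≤ τ) :
    Qfun n τ = ∑' k : ℕ, coefA n k * τ ^ k := by
  rw [Q_eq hτ]
  refine tsum_congr fun k => ?_
  rw [coefA]
  ring

lemma summable_u (R : ℝ) :
    Summable (fun k : ℕ => (1 / (Nat.factorial k : ℝ)) * ((k : ℝ) * R ^ (k - 1))) := by
  rw [← summable_nat_add_iff 1]
  refine (Real.summable_pow_div_factorial R).congr fun k => ?_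
  have hk : ((k:ℝ) + 1) ≠ 0 := by positivity
  have hf : ((Nat.factorial k : ℝ)) ≠ 0 := by positivity
  simp only [Nat.add_sub_cancel, Nat.factorial_succ]
  push_cast
  field_simp

lemma coefA_deriv_bound (n k : ℕ) {R y : ℝ} (hy : |y| ≤ R) (hR : 0 ≤ R) :
    ‖coefA n k * ((k : ℝ) * y ^ (k - 1))‖ ≤ (1 / (Nat.factorial k : ℝ)) * ((k : ℝ) * R ^ (k - 1)) := by
  have h1 : |coefA n k| ≤ 1 / (Nat.factorial k : ℝ) := by
    rw [coefA, abs_div, abs_mul, abs_pow, abs_neg, abs_one, one_pow, one_mul,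
      abs_of_nonneg (Amom_nonneg n k),
      abs_of_nonneg (by positivity : (0:ℝ) ≤ ((Nat.factorial k : ℝ)) ^ 2)]
    rw [div_le_div_iff₀ (by positivity) (by positivity)]
    have h1f : (1:ℝ) ≤ (Nat.factorial k : ℝ) :=
      Nat.one_le_cast.mpr (Nat.one_le_iff_ne_zero.mpr k.factorial_ne_zero)
    calc Amom n k * (Nat.factorial k : ℝ)
        ≤ (Nat.factorial k : ℝ) * (Nat.factorial k : ℝ) :=
          mul_le_mul_of_nonneg_right (Amom_le n k) (by positivity)
      _ = 1 * ((Nat.factorial k : ℝ)) ^ 2 := by ring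
  rw [norm_mul, norm_mul, Real.norm_eq_abs, Real.norm_eq_abs, Real.norm_eq_abs]
  rw [abs_of_nonneg (Nat.cast_nonneg (α := ℝ) k), abs_pow]
  refine mul_le_mul h1 ?_ (by positivity) (by positivity)
  exact mul_le_mul_of_nonneg_left (pow_le_pow_left₀ (abs_nonneg y) hy _) (Nat.cast_nonneg k)

open Filter Topology Metric in
set_option maxHeartbeats 1000000 in
lemma g_hasDerivAt (n : ℕ) (τ : ℝ) :
    HasDerivAt (fun t => ∑' k : ℕ, coefA n k * t ^ k)
      (∑' k : ℕ, coefA n k * ((k : ℝ) * τ ^ (k - 1))) τ := by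
  set R : ℝ := |τ| + 1 with hR
  have hR0 : 0 ≤ R := by positivity
  have hτmem : τ ∈ ball (0:ℝ) R := by
    rw [mem_ball, Real.dist_eq, sub_zero, hR]
    linarith [abs_nonneg τ]
  exact hasDerivAt_tsum_of_isPreconnected
    (g := fun k t => coefA n k * t ^ k)
    (g' := fun k y => coefA n k * ((k : ℝ) * y ^ (k - 1)))
    (y₀ := τ) (u := fun k => (1 / (Nat.factorial k : ℝ)) * ((k : ℝ) * R ^ (k - 1)))
    (summable_u R) isOpen_ball (convex_ball (0:ℝ) R).isPreconnected
    (fun k y _ => (hasDerivAt_pow k y).const_mul (coefA n k))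
    (fun k y hy => coefA_deriv_bound n k
      (by rw [mem_ball, Real.dist_eq, sub_zero] at hy; exact hy.le) hR0)
    hτmem (summable_coefA n τ) hτmem

lemma summable_deriv_series (n : ℕ) (τ : ℝ) :
    Summable (fun k : ℕ => coefA n k * ((k : ℝ) * τ ^ (k - 1))) := by
  refine Summable.of_norm (Summable.of_nonneg_of_le (fun k => norm_nonneg _)
    (fun k => coefA_deriv_bound n k (le_refl |τ|) (abs_nonneg τ)) ?_)
  exact summable_u |τ|

lemma deriv_sum_eq (n : ℕ) (τ : ℝ) :
    ∑' k : ℕ, coefA n k * ((k : ℝ) * τ ^ (k - 1))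
      = ((∑' k : ℕ, coefA (n+1) k * τ ^ k) - ∑' k : ℕ, coefA n k * τ ^ k) / ((n:ℝ) + 1) := by
  have hsum := summable_deriv_series n τ
  rw [Summable.tsum_eq_zero_add hsum]
  simp only [Nat.cast_zero, zero_mul, mul_zero, zero_add]
  have hterm : ∀ k : ℕ, coefA n (k+1) * ((((k:ℕ)+1 : ℕ) : ℝ) * τ ^ k)
      = (coefA (n+1) k * τ ^ k - coefA n k * τ ^ k) / ((n:ℝ) + 1) := by
    intro k
    have hrec := Amom_rec n k
    have hn : ((n:ℝ) + 1) ≠ 0 := by positivity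
    have hA : Amom n (k+1) = ((k:ℝ) + 1) * (Amom n k - Amom (n+1) k) / ((n:ℝ) + 1) := by
      field_simp
      linarith
    simp only [coefA, hA, Nat.factorial_succ]
    push_cast
    have hk1 : ((k:ℝ) + 1) ≠ 0 := by positivity
    have hf : ((Nat.factorial k : ℝ)) ≠ 0 := by positivity
    field_simp
    ring
  calc ∑' k : ℕ, coefA n (k+1) * ((((k:ℕ)+1 : ℕ) : ℝ) * τ ^ ((k+1) - 1))
      = ∑' k : ℕ, (coefA (n+1) k * τ ^ k - coefA n k * τ ^ k) / ((n:ℝ) + 1) := by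
        refine tsum_congr fun k => ?_
        rw [Nat.add_sub_cancel, hterm k]
    _ = (∑' k : ℕ, (coefA (n+1) k * τ ^ k - coefA n k * τ ^ k)) / ((n:ℝ) + 1) := by
        rw [tsum_div_const]
    _ = ((∑' k : ℕ, coefA (n+1) k * τ ^ k) - ∑' k : ℕ, coefA n k * τ ^ k) / ((n:ℝ) + 1) := by
        rw [Summable.tsum_sub (summable_coefA (n+1) τ) (summable_coefA n τ)]

lemma Amom_zero (n : ℕ) : Amom n 0 = 1 / ((n:ℝ) + 1) := by
  have h1 : Amom n 0 = ∫ z in Set.Ioo (0:ℝ) 1, (1 - z) ^ n := by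
    rw [Amom]
    refine setIntegral_congr_fun measurableSet_Ioo (fun z _ => ?_)
    rw [pow_zero, mul_one]
  rw [h1, ← MeasureTheory.integral_Ioc_eq_integral_Ioo,
    ← intervalIntegral.integral_of_le zero_le_one]
  have h2 := intervalIntegral.integral_comp_sub_left (a := (0:ℝ)) (b := 1)
    (fun x => x ^ n) 1
  simp only [sub_zero, sub_self] at h2
  rw [h2, integral_pow]
  simp

theorem Q_initial_value_and_ode (n : ℕ) :
    Qfun n 0 = 1 / ((n : ℝ) + 1) ∧
      ∀ τ : ℝ, 0 ≤ τ →
        HasDerivWithinAt (Qfun n) ((Qfun (n + 1) τ - Qfun n τ) / ((n : ℝ) + 1))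
          (Set.Ici 0) τ := by
  constructor
  · rw [Q_eq' (le_refl 0)]
    rw [tsum_eq_single 0 (fun k hk => by
      rw [zero_pow hk, mul_zero])]
    rw [pow_zero, mul_one, coefA, Amom_zero]
    norm_num
  · intro τ hτ
    have hg := g_hasDerivAt n τ
    rw [deriv_sum_eq n τ] at hg
    have heq : ∀ t ∈ Set.Ici (0:ℝ), Qfun n t = ∑' k : ℕ, coefA n k * t ^ k :=
      fun t ht => Q_eq' ht
    have hD : ((∑' k : ℕ, coefA (n+1) k * τ ^ k) - ∑' k : ℕ, coefA n k * τ ^ k) / ((n:ℝ) + 1)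
        = (Qfun (n + 1) τ - Qfun n τ) / ((n : ℝ) + 1) := by
      rw [Q_eq' (n := n) hτ, Q_eq' (n := n+1) hτ]
    rw [← hD]
    exact (hg.hasDerivWithinAt).congr heq (Q_eq' hτ)
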